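/- arXiv:1908.06383 — 4 statements merged into one kernel-verified Lean document; each statement's English description precedes it below -/
import Mathlib

section
/- Zeroes of the one-cell functions in the lower half-plane (Lemma 3.6, location): let γ > 0 and set r₀ := (6/5)·max{1, √γ}. Then every zero k ∈ ℂ of F₊(·,γ) with Im k ≤ 0 satisfies |k| < √γ·r₀, and the set of such zeroes is finite; the same holds for F₋(·,γ). -/
open Complex

/-- The entire function `c(z) = Σ (-1)^n z^n/(2n)!`, so that `c(w^2) = cos w`. -/
noncomputable def cEnt (z : ℂ) : ℂ := ∑' n : ℕ, (-1)^n * z^n / ((2*n).factorial : ℂ)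

/-- The entire function `s(z) = Σ (-1)^n z^n/(2n+1)!`, so that `w * s(w^2) = sin w`. -/
noncomputable def sEnt (z : ℂ) : ℂ := ∑' n : ℕ, (-1)^n * z^n / ((2*n+1).factorial : ℂ)

noncomputable def Fminus (k : ℂ) (γ : ℝ) : ℂ :=
  2*I*k * cEnt (k^2 - I*γ) - (2*k^2 - I*γ) * sEnt (k^2 - I*γ)

noncomputable def Fplus (k : ℂ) (γ : ℝ) : ℂ :=
  2*I*k * cEnt (k^2 + I*γ) - (2*k^2 + I*γ) * sEnt (k^2 + I*γ)

noncomputable def Fzero (k : ℂ) (γ : ℝ) : ℂ :=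
  (γ:ℂ)^2 * sEnt (k^2 - I*γ) * sEnt (k^2 + I*γ)

/-- The characteristic function `F(k,ℓ,γ)` of the PT-symmetric waveguide. -/
noncomputable def FF (k : ℂ) (ℓ γ : ℝ) : ℂ :=
  Fminus k γ * Fplus k γ - Complex.exp (-4*I*k*ℓ) * Fzero k γ

lemma cEnt_sq (w : ℂ) : cEnt (w^2) = Complex.cos w := by
  rw [Complex.cos_eq_tsum, cEnt]
  exact tsum_congr fun n => by rw [← pow_mul]

lemma sEnt_sq (w : ℂ) : w * sEnt (w^2) = Complex.sin w := by
  rw [Complex.sin_eq_tsum, sEnt, ← tsum_mul_left]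
  exact tsum_congr fun n => by rw [← pow_mul]; ring

lemma analytic_aux (c : ℕ → ℂ) (hc : ∀ n, ‖c n‖ ≤ 1 / (n.factorial : ℝ)) :
    AnalyticOnNhd ℂ (fun z : ℂ => ∑' n : ℕ, c n * z ^ n) Set.univ := by
  set p := FormalMultilinearSeries.ofScalars ℂ c with hp
  have hrad : p.radius = ⊤ := by
    apply FormalMultilinearSeries.radius_eq_top_of_summable_norm
    intro r
    have h1 : ∀ n, ‖‖p n‖ * (r:ℝ) ^ n‖ ≤ (r:ℝ) ^ n / (n.factorial : ℝ) := by
      intro n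
      rw [Real.norm_eq_abs, _root_.abs_of_nonneg (by positivity)]
      have : ‖p n‖ ≤ 1 / (n.factorial : ℝ) := by
        rw [hp, FormalMultilinearSeries.ofScalars_norm]
        exact hc n
      calc ‖p n‖ * (r:ℝ)^n ≤ (1/(n.factorial : ℝ)) * (r:ℝ)^n := by
            exact mul_le_mul_of_nonneg_right this (by positivity)
        _ = (r:ℝ)^n / (n.factorial : ℝ) := by ring
    exact Summable.of_norm_bounded (Real.summable_pow_div_factorial r) h1
  have hball := p.hasFPowerSeriesOnBall (by rw [hrad]; exact ENNReal.zero_lt_top)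
  have hsum : (fun z : ℂ => ∑' n : ℕ, c n * z ^ n) = p.sum := by
    funext z
    rw [FormalMultilinearSeries.sum]
    exact tsum_congr fun n => by
      rw [hp, FormalMultilinearSeries.ofScalars_apply_eq, smul_eq_mul]
  rw [hsum]
  intro z _
  exact hball.analyticAt_of_mem (by
    simp only [EMetric.mem_ball, hrad]
    exact edist_lt_top z 0)

lemma cEnt_analytic : AnalyticOnNhd ℂ cEnt Set.univ := by
  have := analytic_aux (fun n => (-1)^n / ((2*n).factorial : ℂ)) (fun n => by
    rw [norm_div, norm_pow, norm_neg, norm_one, one_pow]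
    simp only [Complex.norm_natCast]
    apply one_div_le_one_div_of_le (by positivity)
    exact_mod_cast Nat.factorial_le (by omega))
  convert this using 2 with z
  exact tsum_congr fun n => by ring

lemma sEnt_analytic : AnalyticOnNhd ℂ sEnt Set.univ := by
  have := analytic_aux (fun n => (-1)^n / ((2*n+1).factorial : ℂ)) (fun n => by
    rw [norm_div, norm_pow, norm_neg, norm_one, one_pow]
    simp only [Complex.norm_natCast]
    apply one_div_le_one_div_of_le (by positivity)
    exact_mod_cast Nat.factorial_le (by omega))
  convert this using 2 with z
  exact tsum_congr fun n => by ring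

lemma key_fact (k w : ℂ) (γ : ℝ) (hw : w^2 = k^2 + I*γ) :
    w * Fplus k γ =
      (I/2) * ((w+k)^2 * Complex.exp (w*I) - (w-k)^2 * Complex.exp (-w*I)) := by
  have hc : cEnt (k^2 + I*γ) = Complex.cos w := by rw [← hw, cEnt_sq]
  have hs : w * sEnt (k^2 + I*γ) = Complex.sin w := by rw [← hw, sEnt_sq]
  have : w * Fplus k γ = 2*I*k*w * Complex.cos w - (2*k^2 + I*γ) * Complex.sin w := by
    rw [Fplus, hc]; rw [← hs]; ring
  rw [this, Complex.cos, Complex.sin]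
  linear_combination (Complex.exp (-w*I) - Complex.exp (w*I)) * I / 2 * hw

lemma cEnt_conj (z : ℂ) : cEnt ((starRingEnd ℂ) z) = (starRingEnd ℂ) (cEnt z) := by
  unfold cEnt
  rw [show (starRingEnd ℂ) (∑' n : ℕ, (-1)^n * z^n / ((2*n).factorial : ℂ))
      = ∑' n : ℕ, (starRingEnd ℂ) ((-1)^n * z^n / ((2*n).factorial : ℂ)) from tsum_star]
  exact tsum_congr fun n => by
    simp [map_div₀, map_mul, map_pow]

lemma sEnt_conj (z : ℂ) : sEnt ((starRingEnd ℂ) z) = (starRingEnd ℂ) (sEnt z) := by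
  unfold sEnt
  rw [show (starRingEnd ℂ) (∑' n : ℕ, (-1)^n * z^n / ((2*n+1).factorial : ℂ))
      = ∑' n : ℕ, (starRingEnd ℂ) ((-1)^n * z^n / ((2*n+1).factorial : ℂ)) from tsum_star]
  exact tsum_congr fun n => by
    simp [map_div₀, map_mul, map_pow]

lemma Fminus_conj (k : ℂ) (γ : ℝ) :
    Fminus k γ = (starRingEnd ℂ) (Fplus (-(starRingEnd ℂ) k) γ) := by
  have h1 : (-(starRingEnd ℂ) k)^2 + I*(γ:ℂ) = (starRingEnd ℂ) (k^2 - I*γ) := by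
    simp [map_sub, map_mul, map_pow, Complex.conj_I, Complex.conj_ofReal]
  rw [Fplus, Fminus, h1, cEnt_conj, sEnt_conj, map_sub, map_mul, map_mul]
  simp only [map_mul, map_add, map_pow, map_ofNat, Complex.conj_conj, Complex.conj_I,
    Complex.conj_ofReal, map_neg]
  ring

set_option maxHeartbeats 2000000 in
lemma fplus_bound (γ : ℝ) (hγ : 0 < γ) (k : ℂ) (h0 : Fplus k γ = 0) (him : k.im ≤ 0) :
    ‖k‖ < Real.sqrt γ * ((6/5) * max 1 (Real.sqrt γ)) := by
  by_contra hlt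
  push_neg at hlt
  set m := max 1 (Real.sqrt γ) with hm
  have hm1 : (1:ℝ) ≤ m := le_max_left _ _
  have hsm : Real.sqrt γ ≤ m := le_max_right _ _
  have hsγpos : 0 < Real.sqrt γ := Real.sqrt_pos.mpr hγ
  have hsq : Real.sqrt γ ^ 2 = γ := Real.sq_sqrt hγ.le
  obtain ⟨w, hw2, hre⟩ : ∃ w : ℂ, w^2 = k^2 + I*γ ∧ 0 ≤ (w * (starRingEnd ℂ) k).re := by
    set w₀ := (k^2 + I*(γ:ℂ)) ^ ((2:ℂ)⁻¹) with hw₀def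
    have hw₀ : w₀^2 = k^2 + I*γ := Complex.cpow_ofNat_inv_pow _ 2
    rcases le_total 0 ((w₀ * (starRingEnd ℂ) k).re) with h | h
    · exact ⟨w₀, hw₀, h⟩
    · refine ⟨-w₀, by rw [neg_pow]; simpa using hw₀, ?_⟩
      rw [neg_mul, Complex.neg_re]; linarith
  set a := ‖k‖ with hadef
  set A := ‖w + k‖ with hAdef
  set d := ‖w - k‖ with hddef
  have ha : Real.sqrt γ * ((6/5)*m) ≤ a := hlt
  have hapos : 0 < a := lt_of_lt_of_le (by positivity) ha
  have hAa : a ≤ A := by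
    have h1 : Complex.normSq k ≤ Complex.normSq (w + k) := by
      rw [Complex.normSq_add]
      nlinarith [Complex.normSq_nonneg w]
    have h2 : a^2 ≤ A^2 := by
      rw [hadef, hAdef, Complex.sq_norm, Complex.sq_norm]; exact h1
    nlinarith [norm_nonneg (w+k), norm_nonneg k]
  have hApos : 0 < A := lt_of_lt_of_le hapos hAa
  have hdA : d * A = γ := by
    have h1 : (w - k) * (w + k) = I * γ := by linear_combination hw2
    rw [hddef, hAdef, ← norm_mul, h1, norm_mul, Complex.norm_I, Complex.norm_real, Real.norm_eq_abs, one_mul,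
      _root_.abs_of_pos hγ]
  have hdnn : 0 ≤ d := norm_nonneg _
  have ha2 : γ * (36/25) * m^2 ≤ a^2 := by
    have := mul_le_mul ha ha (by positivity) hapos.le
    nlinarith [this, hsq]
  have hm2 : (1:ℝ) ≤ m^2 := by nlinarith
  have hγa : γ ≤ (25/36)*a^2 := by nlinarith [ha2, hm2, hγ]
  have hda : d ≤ (25/36) * a := by
    have hh := mul_le_mul_of_nonneg_left hAa hdnn
    rw [hdA] at hh
    have hfinal : d * a ≤ (25/36*a)*a := by nlinarith [hh, hγa]
    exact le_of_mul_le_mul_right hfinal hapos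
  have h2a : 2*a ≤ A + d := by
    have h1 : ‖(w+k) - (w-k)‖ ≤ ‖w+k‖ + ‖w-k‖ := norm_sub_le _ _
    have h2 : (w+k) - (w-k) = 2*k := by ring
    rw [h2] at h1
    have h3 : ‖(2:ℂ)*k‖ = 2*a := by
      rw [norm_mul, hadef]
      norm_num
    rw [h3] at h1
    exact h1
  have hA47 : (47/36)*a ≤ A := by linarith
  have hAlow : (47/30)*(Real.sqrt γ * m) ≤ A := by
    have := mul_le_mul_of_nonneg_left ha (by norm_num : (0:ℝ) ≤ 47/36)
    linarith
  have him_w : w.im ≤ d := by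
    have h1 : w.im = k.im + (w-k).im := by simp [Complex.sub_im]
    have h2 : (w-k).im ≤ d := le_trans (le_abs_self _) (Complex.abs_im_le_norm _)
    linarith
  have hd_small : d ≤ 30/47 := by
    have h1 : d * ((47/30)*(Real.sqrt γ * m)) ≤ d * A := mul_le_mul_of_nonneg_left hAlow hdnn
    rw [hdA] at h1
    have h2 : γ ≤ Real.sqrt γ * m := by nlinarith [hsq, hsm, hsγpos]
    have h3 : 0 < Real.sqrt γ * m := by positivity
    nlinarith [h1, h2, h3, hdnn]
  -- zero equation
  have hfact := key_fact k w γ hw2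
  rw [h0, mul_zero] at hfact
  have heq : (w+k)^2 * Complex.exp (w*I) = (w-k)^2 * Complex.exp (-w*I) := by
    have hI : (I:ℂ)/2 ≠ 0 := by
      simp [Complex.I_ne_zero]
    rcases mul_eq_zero.mp hfact.symm with h | h
    · exact absurd h hI
    · exact sub_eq_zero.mp h
  have habs : A^2 * Real.exp (-(w.im)) = d^2 * Real.exp (w.im) := by
    have h1 := congrArg norm heq
    rw [norm_mul, norm_mul, norm_pow, norm_pow, Complex.norm_exp, Complex.norm_exp] at h1
    simpa [Complex.mul_I_re, Complex.neg_im, Complex.neg_re] using h1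
  have e1 : Real.exp (-(w.im)) * Real.exp (w.im) = 1 := by
    rw [← Real.exp_add]; simp
  have e2 : Real.exp (w.im) * Real.exp (w.im) = Real.exp (2*w.im) := by
    rw [← Real.exp_add]; ring_nf
  have hA4 : A^4 = γ^2 * Real.exp (2*w.im) := by
    linear_combination (A^2 * Real.exp (w.im)) * habs - A^4 * e1 + (d^2*A^2) * e2
      + (Real.exp (2*w.im) * (d*A + γ)) * hdA
  have hexp : Real.exp (2*w.im) ≤ Real.exp (3/2) :=
    Real.exp_le_exp.mpr (by linarith)
  have hnum : Real.exp (3/2) < 6 := by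
    have h1 : Real.exp (3/2) * Real.exp (3/2) = Real.exp 3 := by
      rw [← Real.exp_add]; norm_num
    have h2 : Real.exp 3 = Real.exp 1 ^ 3 := by
      rw [← Real.exp_nat_mul]; norm_num
    have h3 : Real.exp 1 < 2.72 := lt_trans Real.exp_one_lt_d9 (by norm_num)
    have h3sq : Real.exp 1 * Real.exp 1 < 2.72*2.72 := by nlinarith [h3, Real.exp_pos 1]
    have h3cube : Real.exp 1 ^ 3 < 21 := by nlinarith [h3, h3sq, Real.exp_pos 1]
    nlinarith [h1, h2, h3cube, Real.exp_pos (3/2)]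
  have hq1 : (0:ℝ) ≤ (47/30)*(Real.sqrt γ * m) := by positivity
  have hs1 : ((47/30)*(Real.sqrt γ * m))^2 ≤ A^2 := by
    nlinarith [mul_le_mul hAlow hAlow hq1 hApos.le]
  have hA4ge : 6 * γ^2 < A^4 := by
    have hs2 : (((47/30)*(Real.sqrt γ * m))^2)^2 ≤ (A^2)^2 := by
      nlinarith [hs1, sq_nonneg ((47/30)*(Real.sqrt γ * m))]
    have hm4 : (1:ℝ) ≤ m^4 := by nlinarith [hm2]
    have hγ2 : (0:ℝ) < γ^2 := by positivity
    have hmm : γ^2 ≤ γ^2 * m^4 := by simpa using mul_le_mul_of_nonneg_left hm4 (sq_nonneg γ)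
    have hL : ((47/30*(Real.sqrt γ * m))^2)^2 = (47/30:ℝ)^4 * (γ^2 * m^4) := by
      rw [show ((47/30*(Real.sqrt γ * m))^2)^2
          = (47/30:ℝ)^4 * ((Real.sqrt γ)^2)^2 * m^4 by ring, hsq]
      ring
    have hA4' : (A^2)^2 = A^4 := by ring
    linarith [hs2, hL, hA4', hmm, hγ2]
  have hγ2 : (0:ℝ) < γ^2 := by positivity
  nlinarith [hA4, hA4ge, mul_le_mul_of_nonneg_left hexp (sq_nonneg γ),
    mul_lt_mul_of_pos_left hnum hγ2]

theorem stmt_10 (γ : ℝ) (hγ : 0 < γ) :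
    (∀ k : ℂ, Fplus k γ = 0 → k.im ≤ 0 →
        ‖k‖ < Real.sqrt γ * ((6/5) * max 1 (Real.sqrt γ))) ∧
    Set.Finite {k : ℂ | Fplus k γ = 0 ∧ k.im ≤ 0} ∧
    (∀ k : ℂ, Fminus k γ = 0 → k.im ≤ 0 →
        ‖k‖ < Real.sqrt γ * ((6/5) * max 1 (Real.sqrt γ))) ∧
    Set.Finite {k : ℂ | Fminus k γ = 0 ∧ k.im ≤ 0} := by
  set R := Real.sqrt γ * ((6/5) * max 1 (Real.sqrt γ)) with hR
  have hRpos : 0 < R := by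
    have : 0 < Real.sqrt γ := Real.sqrt_pos.mpr hγ
    have h1 : (1:ℝ) ≤ max 1 (Real.sqrt γ) := le_max_left _ _
    positivity
  have hbound := fun k => fplus_bound γ hγ k
  -- analyticity of Fplus
  have hF : AnalyticOnNhd ℂ (fun k => Fplus k γ) Set.univ := by
    intro k _
    have h1 : AnalyticAt ℂ (fun k : ℂ => k^2 + I*γ) k :=
      ((analyticAt_id).pow 2).add analyticAt_const
    have hc : AnalyticAt ℂ (fun k : ℂ => cEnt (k^2 + I*γ)) k :=
      (cEnt_analytic _ (Set.mem_univ _)).comp h1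
    have hs : AnalyticAt ℂ (fun k : ℂ => sEnt (k^2 + I*γ)) k :=
      (sEnt_analytic _ (Set.mem_univ _)).comp h1
    exact ((analyticAt_const.mul analyticAt_id).mul hc).sub
      (((analyticAt_const.mul ((analyticAt_id).pow 2)).add analyticAt_const).mul hs)
  have hfin : Set.Finite {k : ℂ | Fplus k γ = 0 ∧ k.im ≤ 0} := by
    by_contra hinf
    have hsub : {k : ℂ | Fplus k γ = 0 ∧ k.im ≤ 0} ⊆ Metric.closedBall 0 R := by
      intro k hk
      rw [Metric.mem_closedBall, dist_zero_right]
      exact (hbound k hk.1 hk.2).le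
    have hinf' : Set.Infinite {k : ℂ | Fplus k γ = 0 ∧ k.im ≤ 0} := hinf
    obtain ⟨x, _, hx⟩ := hinf'.exists_accPt_of_subset_isCompact
      (isCompact_closedBall (0:ℂ) R) hsub
    have hfreq : ∃ᶠ z in nhdsWithin x {x}ᶜ, Fplus z γ = 0 := by
      rw [frequently_nhdsWithin_iff]
      have := accPt_iff_frequently.mp hx
      exact this.mono fun y hy => ⟨hy.2.1, hy.1⟩
    have hzero : Set.EqOn (fun k => Fplus k γ) 0 Set.univ :=
      hF.eqOn_zero_of_preconnected_of_frequently_eq_zero isPreconnected_univ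
        (Set.mem_univ x) hfreq
    have h1 : Fplus ((R+1 : ℝ) : ℂ) γ = 0 := hzero (Set.mem_univ _)
    have h2 := hbound _ h1 (by simp)
    rw [Complex.norm_real, Real.norm_eq_abs, _root_.abs_of_pos (by linarith)] at h2
    linarith
  have hminus_zero : ∀ k : ℂ, Fminus k γ = 0 → Fplus (-(starRingEnd ℂ) k) γ = 0 := by
    intro k h
    have := Fminus_conj k γ
    rw [h] at this
    exact (star_eq_zero).mp this.symm
  have hmb : ∀ k : ℂ, Fminus k γ = 0 → k.im ≤ 0 → ‖k‖ < R := by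
    intro k h him
    have h1 := hbound (-(starRingEnd ℂ) k) (hminus_zero k h) (by
      simp [Complex.neg_im, Complex.conj_im]
      exact him)
    rwa [norm_neg, Complex.norm_conj] at h1
  refine ⟨hbound, hfin, hmb, ?_⟩
  · have himg : {k : ℂ | Fminus k γ = 0 ∧ k.im ≤ 0} ⊆
        (fun k : ℂ => -(starRingEnd ℂ) k) '' {k : ℂ | Fplus k γ = 0 ∧ k.im ≤ 0} := by
      intro k hk
      refine ⟨-(starRingEnd ℂ) k, ⟨hminus_zero k hk.1, ?_⟩, by simp⟩
      simp [Complex.neg_im, Complex.conj_im]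
      exact hk.2
    exact (hfin.image _).subset himg
end

section
/- Simplicity of zeroes of the one-cell functions (Lemma 3.6, multiplicities): for every γ > 0, if k ∈ ℂ satisfies F₊(k,γ) = 0 and ∂F₊/∂k(k,γ) = 0, then k = 2i and moreover ∂²F₊/∂k²(2i,γ) ≠ 0; hence every zero of F₊(·,γ) other than a possible zero at k = 2i is simple, and if k = 2i is a zero it has order at most two. The same statements hold for F₋(·,γ). -/
open Complex

namespace Stmt12Aux

open FormalMultilinearSeries



noncomputable def cCoef (n : ℕ) : ℂ := (-1)^n / ((2*n).factorial : ℂ)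
noncomputable def sCoef (n : ℕ) : ℂ := (-1)^n / ((2*n+1).factorial : ℂ)

lemma summable_aux (m : ℕ → ℕ) (hm : ∀ n, n ≤ m n) (r : NNReal) :
    Summable (fun n => (1 / ((m n).factorial : ℝ)) * (r:ℝ)^n) := by
  apply Summable.of_nonneg_of_le (fun n => by positivity) _
    (Real.summable_pow_div_factorial r)
  intro n
  rw [one_div, inv_mul_eq_div]
  apply div_le_div_of_nonneg_left (by positivity) (by positivity)
  exact_mod_cast Nat.factorial_le (hm n)

lemma radius_top (co : ℕ → ℂ) (m : ℕ → ℕ) (hm : ∀ n, n ≤ m n)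
    (hco : ∀ n, ‖co n‖ = 1 / ((m n).factorial : ℝ)) :
    (ofScalars ℂ co).radius = ⊤ := by
  apply ENNReal.eq_top_of_forall_nnreal_le
  intro r
  apply le_radius_of_summable
  have h : (fun n => ‖ofScalars ℂ co n‖ * (r:ℝ)^n)
      = fun n => (1/((m n).factorial : ℝ)) * (r:ℝ)^n := by
    funext n; rw [ofScalars_norm, hco]
  rw [h]
  exact summable_aux m hm r

lemma cCoef_norm (n : ℕ) : ‖cCoef n‖ = 1 / (((2*n).factorial : ℕ) : ℝ) := by
  simp [cCoef]

lemma sCoef_norm (n : ℕ) : ‖sCoef n‖ = 1 / (((2*n+1).factorial : ℕ) : ℝ) := by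
  simp [sCoef]

lemma cEnt_eq : cEnt = (ofScalars ℂ cCoef).sum := by
  funext z
  rw [cEnt, FormalMultilinearSeries.sum]
  congr 1; funext n
  rw [ofScalars_apply_eq, cCoef, smul_eq_mul]
  ring

lemma sEnt_eq : sEnt = (ofScalars ℂ sCoef).sum := by
  funext z
  rw [sEnt, FormalMultilinearSeries.sum]
  congr 1; funext n
  rw [ofScalars_apply_eq, sCoef, smul_eq_mul]
  ring

lemma cEnt_fps : HasFPowerSeriesOnBall cEnt (ofScalars ℂ cCoef) 0 ⊤ := by
  have hr : (ofScalars ℂ cCoef).radius = ⊤ :=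
    radius_top _ (fun n => 2*n) (fun n => by omega) cCoef_norm
  have h := (ofScalars ℂ cCoef).hasFPowerSeriesOnBall (by rw [hr]; exact ENNReal.zero_lt_top)
  rw [hr] at h
  rwa [cEnt_eq]

lemma sEnt_fps : HasFPowerSeriesOnBall sEnt (ofScalars ℂ sCoef) 0 ⊤ := by
  have hr : (ofScalars ℂ sCoef).radius = ⊤ :=
    radius_top _ (fun n => 2*n+1) (fun n => by omega) sCoef_norm
  have h := (ofScalars ℂ sCoef).hasFPowerSeriesOnBall (by rw [hr]; exact ENNReal.zero_lt_top)
  rw [hr] at h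
  rwa [sEnt_eq]

lemma cEnt_an : AnalyticOnNhd ℂ cEnt Set.univ :=
  fun z _ => cEnt_fps.analyticAt_of_mem (by simp [edist_lt_top])

lemma sEnt_an : AnalyticOnNhd ℂ sEnt Set.univ :=
  fun z _ => sEnt_fps.analyticAt_of_mem (by simp [edist_lt_top])

lemma cEnt_sq (w : ℂ) : cEnt (w^2) = Complex.cos w := by
  rw [cEnt, ← (Complex.hasSum_cos w).tsum_eq]
  congr 1; funext n
  rw [pow_mul]

lemma sEnt_sq (w : ℂ) : w * sEnt (w^2) = Complex.sin w := by
  rw [sEnt, ← (Complex.hasSum_sin w).tsum_eq, ← tsum_mul_left]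
  congr 1; funext n
  ring

lemma pyth (z : ℂ) : cEnt z ^ 2 + z * sEnt z ^ 2 = 1 := by
  obtain ⟨w, rfl⟩ := IsAlgClosed.exists_pow_nat_eq z (n := 2) (by norm_num)
  have h1 := cEnt_sq w
  have h2 := sEnt_sq w
  have h3 := Complex.sin_sq_add_cos_sq w
  linear_combination (cEnt (w^2) + Complex.cos w) * h1
    + (w * sEnt (w^2) + Complex.sin w) * h2 + h3



noncomputable def sd : ℂ → ℂ := deriv sEnt
noncomputable def sdd : ℂ → ℂ := deriv sd

lemma sd_an : AnalyticOnNhd ℂ sd Set.univ := sEnt_an.deriv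
lemma sdd_an : AnalyticOnNhd ℂ sdd Set.univ := sd_an.deriv

lemma cEnt_diff (z : ℂ) : DifferentiableAt ℂ cEnt z :=
  (cEnt_an z trivial).differentiableAt
lemma sEnt_diff (z : ℂ) : DifferentiableAt ℂ sEnt z :=
  (sEnt_an z trivial).differentiableAt
lemma sd_diff (z : ℂ) : DifferentiableAt ℂ sd z :=
  (sd_an z trivial).differentiableAt

lemma sEnt_hasDerivAt (z : ℂ) : HasDerivAt sEnt (sd z) z := (sEnt_diff z).hasDerivAt
lemma sd_hasDerivAt (z : ℂ) : HasDerivAt sd (sdd z) z := (sd_diff z).hasDerivAt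

lemma cEnt_deriv_eq : deriv cEnt = fun z => -sEnt z / 2 := by
  apply Continuous.ext_on (dense_compl_singleton (0:ℂ))
  · exact continuous_iff_continuousAt.mpr
      (fun z => ((cEnt_an.deriv z trivial).differentiableAt.continuousAt))
  · exact continuous_iff_continuousAt.mpr
      (fun z => ((sEnt_diff z).continuousAt.neg.div_const 2))
  · intro z hz
    obtain ⟨w, rfl⟩ := IsAlgClosed.exists_pow_nat_eq z (n := 2) (by norm_num)
    have hw : w ≠ 0 := by
      intro h; apply hz; simp [h]
    have hpow : HasDerivAt (fun x : ℂ => x^2) (2*w) w := by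
      simpa using hasDerivAt_pow 2 w
    have h1 : HasDerivAt (fun x : ℂ => cEnt (x^2)) (deriv cEnt (w^2) * (2*w)) w :=
      by have h := ((cEnt_diff (w^2)).hasDerivAt).comp w hpow; exact h
    have h2 : (fun x : ℂ => cEnt (x^2)) = Complex.cos := funext cEnt_sq
    rw [h2] at h1
    have h4 := h1.unique (Complex.hasDerivAt_cos w)
    rw [← sEnt_sq w] at h4
    have h5 : w * (deriv cEnt (w^2) * 2 + sEnt (w^2)) = 0 := by linear_combination h4
    have h6 := (mul_eq_zero.mp h5).resolve_left hw
    show deriv cEnt (w^2) = -sEnt (w^2) / 2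
    linear_combination h6 / 2

lemma cEnt_hasDerivAt (z : ℂ) : HasDerivAt cEnt (-sEnt z / 2) z := by
  have := (cEnt_diff z).hasDerivAt
  rwa [cEnt_deriv_eq] at this

lemma sd_identity (z : ℂ) : 2 * z * sd z = cEnt z - sEnt z := by
  obtain ⟨w, rfl⟩ := IsAlgClosed.exists_pow_nat_eq z (n := 2) (by norm_num)
  have hpow : HasDerivAt (fun x : ℂ => x^2) (2*w) w := by
    simpa using hasDerivAt_pow 2 w
  have hs : HasDerivAt (fun x : ℂ => sEnt (x^2)) (sd (w^2) * (2*w)) w :=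
    by have h := (sEnt_hasDerivAt (w^2)).comp w hpow; exact h
  have h1 : HasDerivAt (fun x : ℂ => x * sEnt (x^2))
      (1 * sEnt (w^2) + w * (sd (w^2) * (2*w))) w := (hasDerivAt_id w).mul hs
  have h2 : (fun x : ℂ => x * sEnt (x^2)) = Complex.sin := funext sEnt_sq
  rw [h2] at h1
  have h4 := h1.unique (Complex.hasDerivAt_sin w)
  rw [← cEnt_sq w] at h4
  linear_combination h4

lemma sdd_identity (z : ℂ) :
    2 * sd z + 2 * z * sdd z = -sEnt z / 2 - sd z := by
  have hL : HasDerivAt (fun z : ℂ => 2 * z * sd z)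
      ((2 * 1) * sd z + 2 * z * sdd z) z :=
    (((hasDerivAt_id z).const_mul 2)).mul (sd_hasDerivAt z)
  have hR : HasDerivAt (fun z : ℂ => cEnt z - sEnt z) (-sEnt z / 2 - sd z) z :=
    (cEnt_hasDerivAt z).sub (sEnt_hasDerivAt z)
  have he : (fun z : ℂ => 2 * z * sd z) = fun z => cEnt z - sEnt z := funext sd_identity
  rw [he] at hL
  have := hL.unique hR
  linear_combination this



noncomputable def G (a k : ℂ) : ℂ :=
  2*I*k * cEnt (k^2+a) - (2*k^2+a) * sEnt (k^2+a)
noncomputable def Gp (a k : ℂ) : ℂ :=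
  2*I*cEnt (k^2+a) - 2*I*k^2*sEnt (k^2+a) - 4*k*sEnt (k^2+a)
    - 2*k*(2*k^2+a)*sd (k^2+a)
noncomputable def Gpp (a k : ℂ) : ℂ :=
  -6*I*k*sEnt (k^2+a) - 4*sEnt (k^2+a) - 4*I*k^3*sd (k^2+a) - 16*k^2*sd (k^2+a)
    - 2*(2*k^2+a)*sd (k^2+a) - 4*k^2*(2*k^2+a)*sdd (k^2+a)

lemma hasDerivAt_z (a k : ℂ) : HasDerivAt (fun x : ℂ => x^2 + a) (2*k) k := by
  simpa using (hasDerivAt_pow 2 k).add_const a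

lemma hasDerivAt_G (a k : ℂ) : HasDerivAt (G a) (Gp a k) k := by
  have hz := hasDerivAt_z a k
  have hc : HasDerivAt (fun x : ℂ => cEnt (x^2+a)) (-sEnt (k^2+a)/2 * (2*k)) k :=
    by have h := (cEnt_hasDerivAt (k^2+a)).comp k hz; exact h
  have hs : HasDerivAt (fun x : ℂ => sEnt (x^2+a)) (sd (k^2+a) * (2*k)) k :=
    by have h := (sEnt_hasDerivAt (k^2+a)).comp k hz; exact h
  have h1 : HasDerivAt (fun x : ℂ => 2*I*x) (2*I) k := by
    simpa using (hasDerivAt_id k).const_mul (2*I)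
  have hM : HasDerivAt (fun x : ℂ => 2*x^2+a) (2*(2*k)) k := by
    simpa using ((hasDerivAt_pow 2 k).const_mul 2).add_const a
  have h := (h1.mul hc).sub (hM.mul hs)
  refine HasDerivAt.congr_deriv (f := G a) h ?_
  rw [Gp]; ring

lemma hasDerivAt_Gp (a k : ℂ) : HasDerivAt (Gp a) (Gpp a k) k := by
  have hz := hasDerivAt_z a k
  have hc : HasDerivAt (fun x : ℂ => cEnt (x^2+a)) (-sEnt (k^2+a)/2 * (2*k)) k :=
    by have h := (cEnt_hasDerivAt (k^2+a)).comp k hz; exact h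
  have hs : HasDerivAt (fun x : ℂ => sEnt (x^2+a)) (sd (k^2+a) * (2*k)) k :=
    by have h := (sEnt_hasDerivAt (k^2+a)).comp k hz; exact h
  have ht : HasDerivAt (fun x : ℂ => sd (x^2+a)) (sdd (k^2+a) * (2*k)) k :=
    (sd_hasDerivAt (k^2+a)).comp k hz
  have hM : HasDerivAt (fun x : ℂ => 2*x^2+a) (2*(2*k)) k := by
    simpa using ((hasDerivAt_pow 2 k).const_mul 2).add_const a
  have h2 : HasDerivAt (fun x : ℂ => 2*I*x^2) (2*I*(2*k)) k := by
    simpa [mul_assoc] using (hasDerivAt_pow 2 k).const_mul (2*I)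
  have h1 := hc.const_mul (2*I)
  have hB := (h2.mul hs)
  have hC : HasDerivAt (fun x : ℂ => 4*x) (4:ℂ) k := by
    simpa using (hasDerivAt_id k).const_mul (4:ℂ)
  have hCs := hC.mul hs
  have hk2 : HasDerivAt (fun x : ℂ => 2*x) (2:ℂ) k := by
    simpa using (hasDerivAt_id k).const_mul (2:ℂ)
  have hD := ((hk2.mul hM).mul ht)
  have h := ((h1.sub hB).sub hCs).sub hD
  refine HasDerivAt.congr_deriv (f := Gp a) h ?_
  rw [Gpp, Pi.mul_apply]; ring

lemma deriv_G (a : ℂ) : deriv (G a) = Gp a :=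
  funext fun k => (hasDerivAt_G a k).deriv

lemma Dval (k a : ℂ) :
    2*I*k*(-(2*I)*k^2*(k^2+a) - 4*k*(k^2+a) + k*(2*k^2+a))
      - (2*I*(k^2+a) - k*(2*k^2+a))*(-(2*k^2+a)) = -a^2*(k-2*I) := by
  linear_combination (-4*k^3*(k^2+a)) * Complex.I_sq

lemma main (a : ℂ) (ha : a ≠ 0) (ha4 : a - 4 ≠ 0) (k : ℂ)
    (h0 : G a k = 0) (h1 : deriv (G a) k = 0) :
    k = 2*I ∧ deriv (deriv (G a)) (2*I) ≠ 0 := by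
  rw [deriv_G] at h1
  rw [G] at h0
  rw [Gp] at h1
  have hk : k = 2*I := by
    by_contra hk
    have hT := sd_identity (k^2+a)
    have hP := pyth (k^2+a)
    have eq2 : (2*I*(k^2+a) - k*(2*k^2+a)) * cEnt (k^2+a)
        + (-(2*I)*k^2*(k^2+a) - 4*k*(k^2+a) + k*(2*k^2+a)) * sEnt (k^2+a) = 0 := by
      linear_combination (k^2+a)*h1 + k*(2*k^2+a)*hT
    have hDc : (-(a^2*(k-2*I))) * cEnt (k^2+a) = 0 := by
      linear_combination (-(2*I)*k^2*(k^2+a) - 4*k*(k^2+a) + k*(2*k^2+a))*h0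
        - (-(2*k^2+a))*eq2 - cEnt (k^2+a) * Dval k a
    have hDs : (-(a^2*(k-2*I))) * sEnt (k^2+a) = 0 := by
      linear_combination (2*I*k)*eq2 - (2*I*(k^2+a) - k*(2*k^2+a))*h0
        - sEnt (k^2+a) * Dval k a
    have hD : (-(a^2*(k-2*I))) ≠ 0 :=
      neg_ne_zero.mpr (mul_ne_zero (pow_ne_zero 2 ha) (sub_ne_zero.mpr hk))
    have hc0 := (mul_eq_zero.mp hDc).resolve_left hD
    have hs0 := (mul_eq_zero.mp hDs).resolve_left hD
    rw [hc0, hs0] at hP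
    simp at hP
  subst hk
  refine ⟨rfl, ?_⟩
  rw [deriv_G]
  rw [(hasDerivAt_Gp a (2*I)).deriv]
  rw [Gpp]
  intro hV
  have hz2 : (2*I)^2 + a = a - 4 := by linear_combination 4*Complex.I_sq
  rw [hz2] at hV h0
  have hP := pyth (a-4)
  have hT := sd_identity (a-4)
  have hU := sdd_identity (a-4)
  set s₀ := sEnt (a-4) with hs₀
  set c₀ := cEnt (a-4) with hc₀
  set t₀ := sd (a-4) with ht₀
  set u₀ := sdd (a-4) with hu₀
  have h0' : 4*c₀ + (a-8)*s₀ = 0 := by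
    linear_combination (-1)*h0 + (4*c₀ - 8*s₀)*Complex.I_sq
  have hV' : 8*s₀ + (48-2*a)*t₀ + 16*(a-8)*u₀ = 0 := by
    linear_combination hV + (12*s₀ + (32*I^2+48)*t₀ + (16*a+128*I^2-128)*u₀) * Complex.I_sq
  have h16 : a^2*s₀^2 = 16 := by
    linear_combination ((a-8)*s₀ - 4*c₀)*h0' + 16*hP
  have h8t0 : (a-4)*(8*t₀+s₀) = 0 := by
    linear_combination 4*hT + h0'
  have h8t := (mul_eq_zero.mp h8t0).resolve_left ha4
  have h16u : 16*(a-4)*u₀ + s₀ = 0 := by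
    linear_combination 8*hU - 3*h8t
  have hAS : a^2*s₀ = 0 := by
    linear_combination 4*(a-4)*hV' + ((a-24)*(a-4))*h8t + (-4*(a-8))*h16u
  have : (16:ℂ) = 0 := by linear_combination (-1)*h16 + s₀*hAS
  norm_num at this


end Stmt12Aux

theorem stmt_12 (γ : ℝ) (hγ : 0 < γ) :
    (∀ k : ℂ, Fplus k γ = 0 → deriv (fun k : ℂ => Fplus k γ) k = 0 →
        k = 2*I ∧ iteratedDeriv 2 (fun k : ℂ => Fplus k γ) (2*I) ≠ 0) ∧
    (∀ k : ℂ, Fminus k γ = 0 → deriv (fun k : ℂ => Fminus k γ) k = 0 →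
        k = 2*I ∧ iteratedDeriv 2 (fun k : ℂ => Fminus k γ) (2*I) ≠ 0) := by
  have hfp' : ∀ k : ℂ, Fplus k γ = Stmt12Aux.G (I*(γ:ℂ)) k := fun k => rfl
  have hfp : (fun k : ℂ => Fplus k γ) = Stmt12Aux.G (I*(γ:ℂ)) := funext hfp'
  have hfm' : ∀ k : ℂ, Fminus k γ = Stmt12Aux.G (-(I*(γ:ℂ))) k := fun k => by
    simp only [Fminus, Stmt12Aux.G, sub_eq_add_neg]
  have hfm : (fun k : ℂ => Fminus k γ) = Stmt12Aux.G (-(I*(γ:ℂ))) := funext hfm'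
  have hγ' : (γ:ℂ) ≠ 0 := by exact_mod_cast hγ.ne'
  have haP : I*(γ:ℂ) ≠ 0 := mul_ne_zero I_ne_zero hγ'
  have haP4 : I*(γ:ℂ) - 4 ≠ 0 := by
    intro h
    rw [Complex.ext_iff] at h
    simp at h
  have haM : -(I*(γ:ℂ)) ≠ 0 := neg_ne_zero.mpr haP
  have haM4 : -(I*(γ:ℂ)) - 4 ≠ 0 := by
    intro h
    rw [Complex.ext_iff] at h
    simp at h
  have hiter : ∀ f : ℂ → ℂ, iteratedDeriv 2 f = deriv (deriv f) := by
    intro f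
    rw [show (2:ℕ) = 1+1 from rfl, iteratedDeriv_succ, iteratedDeriv_one]
  constructor
  · intro k h0 h1
    rw [hfp] at h1
    obtain ⟨hk, hdd⟩ := Stmt12Aux.main (I*(γ:ℂ)) haP haP4 k ((hfp' k) ▸ h0) h1
    refine ⟨hk, ?_⟩
    rw [hfp, hiter]
    exact hdd
  · intro k h0 h1
    rw [hfm] at h1
    obtain ⟨hk, hdd⟩ := Stmt12Aux.main (-(I*(γ:ℂ))) haM haM4 k ((hfm' k) ▸ h0) h1
    refine ⟨hk, ?_⟩
    rw [hfm, hiter]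
    exact hdd
end

section
/- No purely imaginary zeroes in the lower half-plane (Lemma 3.5): for every γ > 0, every ℓ ≥ 0 and every t > 0, one has F(−it, ℓ, γ) ≠ 0. Equivalently, the PT-symmetric waveguide has no negative real eigenvalues λ = k² with purely imaginary k in the lower half-plane. -/
open Complex

lemma sinMulSin (a b : ℝ) :
    Complex.sin ((a:ℂ)+(b:ℂ)*I) * Complex.sin ((a:ℂ)-(b:ℂ)*I)
      = ((Real.cosh (2*b):ℂ) - (Real.cos (2*a):ℂ))/2 := by
  have hsum : ((a:ℂ)+(b:ℂ)*I) + ((a:ℂ)-(b:ℂ)*I) = ((2*a:ℝ):ℂ) := by push_cast; ring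
  have hdiff : ((a:ℂ)+(b:ℂ)*I) - ((a:ℂ)-(b:ℂ)*I) = ((2*b:ℝ):ℂ)*I := by push_cast; ring
  have e1 := Complex.cos_add ((a:ℂ)+(b:ℂ)*I) ((a:ℂ)-(b:ℂ)*I)
  have e2 := Complex.cos_sub ((a:ℂ)+(b:ℂ)*I) ((a:ℂ)-(b:ℂ)*I)
  rw [hsum, ← Complex.ofReal_cos] at e1
  rw [hdiff, Complex.cos_mul_I, ← Complex.ofReal_cosh] at e2
  linear_combination (e1 - e2)/2

lemma keyIdent (t a b γ : ℝ) (hb2 : b^2 = a^2 + t^2) (hab : a*b = -(γ/2)) :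
    (2*(t:ℂ)*((a:ℂ)+(b:ℂ)*I)*Complex.cos ((a:ℂ)+(b:ℂ)*I)
        + ((t:ℂ)^2 - ((a:ℂ)+(b:ℂ)*I)^2)*Complex.sin ((a:ℂ)+(b:ℂ)*I)) *
      (2*(t:ℂ)*((a:ℂ)-(b:ℂ)*I)*Complex.cos ((a:ℂ)-(b:ℂ)*I)
        + ((t:ℂ)^2 - ((a:ℂ)-(b:ℂ)*I)^2)*Complex.sin ((a:ℂ)-(b:ℂ)*I))
      - (γ:ℂ)^2 * (Complex.sin ((a:ℂ)+(b:ℂ)*I) * Complex.sin ((a:ℂ)-(b:ℂ)*I))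
    = 2*(t:ℂ)*(2*(t:ℂ)*(b:ℂ)^2*(Real.cosh (2*b):ℂ) + 2*(t:ℂ)*(a:ℂ)^2*(Real.cos (2*a):ℂ)
        + 2*(b:ℂ)^3*(Real.sinh (2*b):ℂ) - 2*(a:ℂ)^3*(Real.sin (2*a):ℂ)) := by
  have hsum : ((a:ℂ)+(b:ℂ)*I) + ((a:ℂ)-(b:ℂ)*I) = ((2*a:ℝ):ℂ) := by push_cast; ring
  have hdiff : ((a:ℂ)+(b:ℂ)*I) - ((a:ℂ)-(b:ℂ)*I) = ((2*b:ℝ):ℂ)*I := by push_cast; ring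
  have e1 := Complex.cos_add ((a:ℂ)+(b:ℂ)*I) ((a:ℂ)-(b:ℂ)*I)
  have e2 := Complex.cos_sub ((a:ℂ)+(b:ℂ)*I) ((a:ℂ)-(b:ℂ)*I)
  have e3 := Complex.sin_add ((a:ℂ)+(b:ℂ)*I) ((a:ℂ)-(b:ℂ)*I)
  have e4 := Complex.sin_sub ((a:ℂ)+(b:ℂ)*I) ((a:ℂ)-(b:ℂ)*I)
  rw [hsum, ← Complex.ofReal_cos] at e1
  rw [hdiff, Complex.cos_mul_I, ← Complex.ofReal_cosh] at e2
  rw [hsum, ← Complex.ofReal_sin] at e3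
  rw [hdiff, Complex.sin_mul_I, ← Complex.ofReal_sinh] at e4
  have hCC : Complex.cos ((a:ℂ)+(b:ℂ)*I) * Complex.cos ((a:ℂ)-(b:ℂ)*I)
      = ((Real.cos (2*a):ℂ) + (Real.cosh (2*b):ℂ))/2 := by linear_combination -(e1 + e2)/2
  have hSS : Complex.sin ((a:ℂ)+(b:ℂ)*I) * Complex.sin ((a:ℂ)-(b:ℂ)*I)
      = ((Real.cosh (2*b):ℂ) - (Real.cos (2*a):ℂ))/2 := by linear_combination (e1 - e2)/2
  have hSC : Complex.sin ((a:ℂ)+(b:ℂ)*I) * Complex.cos ((a:ℂ)-(b:ℂ)*I)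
      = ((Real.sin (2*a):ℂ) + (Real.sinh (2*b):ℂ)*I)/2 := by linear_combination -(e3 + e4)/2
  have hCS : Complex.cos ((a:ℂ)+(b:ℂ)*I) * Complex.sin ((a:ℂ)-(b:ℂ)*I)
      = ((Real.sin (2*a):ℂ) - (Real.sinh (2*b):ℂ)*I)/2 := by linear_combination (e4 - e3)/2
  have hB : (b:ℂ)^2 = (a:ℂ)^2 + (t:ℂ)^2 := by exact_mod_cast hb2
  have hG : (γ:ℂ) = -(2*(a:ℂ)*(b:ℂ)) := by
    have h : γ = -(2*(a*b)) := by linarith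
    rw [h]; push_cast; ring
  linear_combination
    ((-4:ℂ)*(b:ℂ)^2*(t:ℂ)^2*I^2 + (4:ℂ)*(a:ℂ)^2*(t:ℂ)^2) * hCC
    + ((2:ℂ)*(b:ℂ)*(t:ℂ)^3*I + (-2:ℂ)*(b:ℂ)^3*(t:ℂ)*I^3 + (2:ℂ)*(a:ℂ)*(t:ℂ)^3 + (2:ℂ)*(a:ℂ)*(b:ℂ)^2*(t:ℂ)*I^2 + (2:ℂ)*(a:ℂ)^2*(b:ℂ)*(t:ℂ)*I + (-2:ℂ)*(a:ℂ)^3*(t:ℂ)) * hCS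
    + ((-2:ℂ)*(b:ℂ)*(t:ℂ)^3*I + (2:ℂ)*(b:ℂ)^3*(t:ℂ)*I^3 + (2:ℂ)*(a:ℂ)*(t:ℂ)^3 + (2:ℂ)*(a:ℂ)*(b:ℂ)^2*(t:ℂ)*I^2 + (-2:ℂ)*(a:ℂ)^2*(b:ℂ)*(t:ℂ)*I + (-2:ℂ)*(a:ℂ)^3*(t:ℂ)) * hSC
    + ((-1:ℂ)*(γ:ℂ)^2 + (t:ℂ)^4 + (-2:ℂ)*(b:ℂ)^2*(t:ℂ)^2*I^2 + (b:ℂ)^4*I^4 + (-2:ℂ)*(a:ℂ)^2*(t:ℂ)^2 + (-2:ℂ)*(a:ℂ)^2*(b:ℂ)^2*I^2 + (a:ℂ)^4) * hSS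
    + ((-2:ℂ)*(b:ℂ)*(t:ℂ)^3*(Real.sinh (2*b):ℂ) + (-3:ℂ)*(b:ℂ)^2*(t:ℂ)^2*(Real.cosh (2*b):ℂ) + (-1:ℂ)*(b:ℂ)^2*(t:ℂ)^2*(Real.cos (2*a):ℂ) + (-2:ℂ)*(b:ℂ)^3*(t:ℂ)*(Real.sinh (2*b):ℂ) + (2:ℂ)*(b:ℂ)^3*(t:ℂ)*I^2*(Real.sinh (2*b):ℂ) + (-1/2:ℂ)*(b:ℂ)^4*(Real.cosh (2*b):ℂ) + (1/2:ℂ)*(b:ℂ)^4*(Real.cos (2*a):ℂ) + (1/2:ℂ)*(b:ℂ)^4*I^2*(Real.cosh (2*b):ℂ) + (-1/2:ℂ)*(b:ℂ)^4*I^2*(Real.cos (2*a):ℂ) + (2:ℂ)*(a:ℂ)*(b:ℂ)^2*(t:ℂ)*(Real.sin (2*a):ℂ) + (-2:ℂ)*(a:ℂ)^2*(b:ℂ)*(t:ℂ)*(Real.sinh (2*b):ℂ) + (-1:ℂ)*(a:ℂ)^2*(b:ℂ)^2*(Real.cosh (2*b):ℂ) + (a:ℂ)^2*(b:ℂ)^2*(Real.cos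 (2*a):ℂ)) * Complex.I_sq
    + ((-1/2:ℂ)*(γ:ℂ)*(Real.cosh (2*b):ℂ) + (1/2:ℂ)*(γ:ℂ)*(Real.cos (2*a):ℂ) + (a:ℂ)*(b:ℂ)*(Real.cosh (2*b):ℂ) + (-1:ℂ)*(a:ℂ)*(b:ℂ)*(Real.cos (2*a):ℂ)) * hG
    + ((-1/2:ℂ)*(t:ℂ)^2*(Real.cosh (2*b):ℂ) + (1/2:ℂ)*(t:ℂ)^2*(Real.cos (2*a):ℂ) + (-2:ℂ)*(b:ℂ)*(t:ℂ)*(Real.sinh (2*b):ℂ) + (1/2:ℂ)*(b:ℂ)^2*(Real.cosh (2*b):ℂ) + (-1/2:ℂ)*(b:ℂ)^2*(Real.cos (2*a):ℂ) + (-2:ℂ)*(a:ℂ)*(t:ℂ)*(Real.sin (2*a):ℂ) + (-1/2:ℂ)*(a:ℂ)^2*(Real.cosh (2*b):ℂ) + (1/2:ℂ)*(a:ℂ)^2*(Real.cos (2*a):ℂ)) * hB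

theorem stmt_14 (γ ℓ t : ℝ) (hγ : 0 < γ) (hℓ : 0 ≤ ℓ) (ht : 0 < t) :
    FF (-I * t) ℓ γ ≠ 0 := by
  obtain ⟨a, b, ha, hb, hb2, hab⟩ :
      ∃ a b : ℝ, 0 < a ∧ b < 0 ∧ b^2 = a^2 + t^2 ∧ a*b = -(γ/2) := by
    have hr0 : (0:ℝ) ≤ t^4 + γ^2 := by positivity
    have hr2 : Real.sqrt (t^4+γ^2)^2 = t^4 + γ^2 := Real.sq_sqrt hr0
    have hrn : 0 ≤ Real.sqrt (t^4+γ^2) := Real.sqrt_nonneg _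
    have hrt : t^2 < Real.sqrt (t^4+γ^2) := by nlinarith [sq_nonneg t, mul_pos hγ hγ]
    refine ⟨Real.sqrt ((Real.sqrt (t^4+γ^2) - t^2)/2),
      -(Real.sqrt ((Real.sqrt (t^4+γ^2) + t^2)/2)),
      Real.sqrt_pos.mpr (by linarith), ?_, ?_, ?_⟩
    · have : 0 < Real.sqrt ((Real.sqrt (t^4+γ^2) + t^2)/2) :=
        Real.sqrt_pos.mpr (by nlinarith)
      linarith
    · rw [neg_pow, Real.sq_sqrt (by linarith : (0:ℝ) ≤ (Real.sqrt (t^4+γ^2) - t^2)/2),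
        Real.sq_sqrt (by nlinarith : (0:ℝ) ≤ (Real.sqrt (t^4+γ^2) + t^2)/2)]
      ring
    · rw [mul_neg, ← Real.sqrt_mul (by linarith : (0:ℝ) ≤ (Real.sqrt (t^4+γ^2) - t^2)/2)]
      have h2 : ((Real.sqrt (t^4+γ^2) - t^2)/2) * ((Real.sqrt (t^4+γ^2) + t^2)/2)
          = (γ/2)^2 := by linear_combination hr2/4
      rw [h2, Real.sqrt_sq (by positivity)]
  -- complex versions of the relations
  have habC : (a:ℂ)*(b:ℂ) = -((γ:ℂ)/2) := by exact_mod_cast hab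
  have hb2C : (b:ℂ)^2 = (a:ℂ)^2 + (t:ℂ)^2 := by exact_mod_cast hb2
  have hkm : (-I*(t:ℂ))^2 - I*(γ:ℂ) = ((a:ℂ)+(b:ℂ)*I)^2 := by
    linear_combination ((t:ℂ)^2 - (b:ℂ)^2) * Complex.I_sq + hb2C + (-2*I)*habC
  have hkp : (-I*(t:ℂ))^2 + I*(γ:ℂ) = ((a:ℂ)-(b:ℂ)*I)^2 := by
    linear_combination ((t:ℂ)^2 - (b:ℂ)^2) * Complex.I_sq + hb2C + (2*I)*habC
  have hs := sEnt_sq ((a:ℂ)+(b:ℂ)*I)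
  have hs' := sEnt_sq ((a:ℂ)-(b:ℂ)*I)
  have hFm : ((a:ℂ)+(b:ℂ)*I) * Fminus (-I*(t:ℂ)) γ
      = 2*(t:ℂ)*((a:ℂ)+(b:ℂ)*I)*Complex.cos ((a:ℂ)+(b:ℂ)*I)
        + ((t:ℂ)^2 - ((a:ℂ)+(b:ℂ)*I)^2)*Complex.sin ((a:ℂ)+(b:ℂ)*I) := by
    unfold Fminus
    rw [hkm, cEnt_sq, ← hs]
    linear_combination
      ((b:ℂ)*(γ:ℂ)*sEnt (((a:ℂ)+(b:ℂ)*I)^2) + (-2:ℂ)*(b:ℂ)*(t:ℂ)*I*Complex.cos ((a:ℂ)+(b:ℂ)*I) + (-2:ℂ)*(b:ℂ)*(t:ℂ)^2*I*sEnt (((a:ℂ)+(b:ℂ)*I)^2) + (b:ℂ)^3*I*sEnt (((a:ℂ)+(b:ℂ)*I)^2) + (-2:ℂ)*(a:ℂ)*(t:ℂ)*Complex.cos ((a:ℂ)+(b:ℂ)*I) + (-2:ℂ)*(a:ℂ)*(t:ℂ)^2*sEnt (((a:ℂ)+(b:ℂ)*I)^2) + (3:ℂ)*(a:ℂ)*(b:ℂ)^2*sEnt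 (((a:ℂ)+(b:ℂ)*I)^2)) * Complex.I_sq
      + ((-1:ℂ)*(b:ℂ)*I*sEnt (((a:ℂ)+(b:ℂ)*I)^2) + (-1:ℂ)*(a:ℂ)*sEnt (((a:ℂ)+(b:ℂ)*I)^2)) * hb2C
      + (2:ℂ)*((-1:ℂ)*(b:ℂ)*sEnt (((a:ℂ)+(b:ℂ)*I)^2) + (a:ℂ)*I*sEnt (((a:ℂ)+(b:ℂ)*I)^2)) * habC
  have hFp : ((a:ℂ)-(b:ℂ)*I) * Fplus (-I*(t:ℂ)) γ
      = 2*(t:ℂ)*((a:ℂ)-(b:ℂ)*I)*Complex.cos ((a:ℂ)-(b:ℂ)*I)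
        + ((t:ℂ)^2 - ((a:ℂ)-(b:ℂ)*I)^2)*Complex.sin ((a:ℂ)-(b:ℂ)*I) := by
    unfold Fplus
    rw [hkp, cEnt_sq, ← hs']
    linear_combination
      ((b:ℂ)*(γ:ℂ)*sEnt (((a:ℂ)-(b:ℂ)*I)^2) + (2:ℂ)*(b:ℂ)*(t:ℂ)*I*Complex.cos ((a:ℂ)-(b:ℂ)*I) + (2:ℂ)*(b:ℂ)*(t:ℂ)^2*I*sEnt (((a:ℂ)-(b:ℂ)*I)^2) + (-1:ℂ)*(b:ℂ)^3*I*sEnt (((a:ℂ)-(b:ℂ)*I)^2) + (-2:ℂ)*(a:ℂ)*(t:ℂ)*Complex.cos ((a:ℂ)-(b:ℂ)*I) + (-2:ℂ)*(a:ℂ)*(t:ℂ)^2*sEnt (((a:ℂ)-(b:ℂ)*I)^2) + (3:ℂ)*(a:ℂ)*(b:ℂ)^2*sEnt (((a:ℂ)-(b:ℂ)*I)^2)) * Complex.I_sq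
      + ((b:ℂ)*I*sEnt (((a:ℂ)-(b:ℂ)*I)^2) + (-1:ℂ)*(a:ℂ)*sEnt (((a:ℂ)-(b:ℂ)*I)^2)) * hb2C
      + (2:ℂ)*((-1:ℂ)*(b:ℂ)*sEnt (((a:ℂ)-(b:ℂ)*I)^2) + (-1:ℂ)*(a:ℂ)*I*sEnt (((a:ℂ)-(b:ℂ)*I)^2)) * habC
  have hF0 : (((a:ℂ)+(b:ℂ)*I)*((a:ℂ)-(b:ℂ)*I)) * Fzero (-I*(t:ℂ)) γ
      = (γ:ℂ)^2 * (Complex.sin ((a:ℂ)+(b:ℂ)*I) * Complex.sin ((a:ℂ)-(b:ℂ)*I)) := by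
    unfold Fzero
    rw [hkm, hkp]
    linear_combination
      ((γ:ℂ)^2*(((a:ℂ)-(b:ℂ)*I)*sEnt (((a:ℂ)-(b:ℂ)*I)^2))) * hs
      + ((γ:ℂ)^2*Complex.sin ((a:ℂ)+(b:ℂ)*I)) * hs'
  have hE : Complex.exp (-4*I*(-I*(t:ℂ))*(ℓ:ℂ)) = ((Real.exp (-(4*t*ℓ)) : ℝ) : ℂ) := by
    have harg : -4*I*(-I*(t:ℂ))*(ℓ:ℂ) = ((-(4*t*ℓ) : ℝ) : ℂ) := by
      push_cast
      linear_combination (4*(t:ℂ)*(ℓ:ℂ))*Complex.I_sq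
    rw [harg, ← Complex.ofReal_exp]
  have K := keyIdent t a b γ hb2 hab
  have hSS2 := sinMulSin a b
  have hmain : (((a:ℂ)+(b:ℂ)*I)*((a:ℂ)-(b:ℂ)*I)) * FF (-I*(t:ℂ)) ℓ γ
      = 2*(t:ℂ)*(2*(t:ℂ)*(b:ℂ)^2*(Real.cosh (2*b):ℂ) + 2*(t:ℂ)*(a:ℂ)^2*(Real.cos (2*a):ℂ)
          + 2*(b:ℂ)^3*(Real.sinh (2*b):ℂ) - 2*(a:ℂ)^3*(Real.sin (2*a):ℂ))
        + (1 - ((Real.exp (-(4*t*ℓ)) : ℝ):ℂ)) * (γ:ℂ)^2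
            * (((Real.cosh (2*b):ℂ) - (Real.cos (2*a):ℂ))/2) := by
    unfold FF
    rw [hE]
    linear_combination
      (((a:ℂ)-(b:ℂ)*I) * Fplus (-I*(t:ℂ)) γ) * hFm
      + (2*(t:ℂ)*((a:ℂ)+(b:ℂ)*I)*Complex.cos ((a:ℂ)+(b:ℂ)*I)
          + ((t:ℂ)^2 - ((a:ℂ)+(b:ℂ)*I)^2)*Complex.sin ((a:ℂ)+(b:ℂ)*I)) * hFp
      + (-((Real.exp (-(4*t*ℓ)) : ℝ):ℂ)) * hF0
      + K
      + ((1 - ((Real.exp (-(4*t*ℓ)) : ℝ):ℂ))*(γ:ℂ)^2) * hSS2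
  -- the real quantity is positive
  have hE0 : Real.exp (-(4*t*ℓ)) ≤ 1 := Real.exp_le_one_iff.mpr (by nlinarith)
  have hcb : 1 ≤ Real.cosh (2*b) := Real.one_le_cosh _
  have hca : -1 ≤ Real.cos (2*a) := Real.neg_one_le_cos _
  have hca1 : Real.cos (2*a) ≤ 1 := Real.cos_le_one _
  have hsb : Real.sinh (2*b) ≤ 2*b := Real.sinh_le_self_iff.mpr (by linarith)
  have hsa : Real.sin (2*a) ≤ 2*a := Real.sin_le (by linarith)
  have h1 : 2*b^3*(2*b) ≤ 2*b^3*Real.sinh (2*b) :=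
    mul_le_mul_of_nonpos_left hsb (by nlinarith)
  have h2 : 2*a^3*Real.sin (2*a) ≤ 2*a^3*(2*a) :=
    mul_le_mul_of_nonneg_left hsa (by positivity)
  have h3 : 2*t*b^2*1 ≤ 2*t*b^2*Real.cosh (2*b) :=
    mul_le_mul_of_nonneg_left hcb (by positivity)
  have h4 : 2*t*a^2*(-1) ≤ 2*t*a^2*Real.cos (2*a) :=
    mul_le_mul_of_nonneg_left hca (by positivity)
  have h5 : a^4 ≤ b^4 := by nlinarith [sq_nonneg t, sq_nonneg a, sq_nonneg (a*t)]
  have hbt : 2*t*b^2 - 2*t*a^2 = 2*t^3 := by linear_combination (2*t)*hb2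
  have ht3 : 0 < 2*t^3 := by positivity
  have hS : 0 < 2*t*b^2*Real.cosh (2*b) + 2*t*a^2*Real.cos (2*a)
      + 2*b^3*Real.sinh (2*b) - 2*a^3*Real.sin (2*a) := by linarith
  have hQ : 0 < 2*t*(2*t*b^2*Real.cosh (2*b) + 2*t*a^2*Real.cos (2*a)
      + 2*b^3*Real.sinh (2*b) - 2*a^3*Real.sin (2*a)) := mul_pos (by linarith) hS
  have hX : 0 < 2*t*(2*t*b^2*Real.cosh (2*b) + 2*t*a^2*Real.cos (2*a)
      + 2*b^3*Real.sinh (2*b) - 2*a^3*Real.sin (2*a))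
      + (1 - Real.exp (-(4*t*ℓ))) * γ^2 * ((Real.cosh (2*b) - Real.cos (2*a))/2) := by
    have hnn : 0 ≤ (1 - Real.exp (-(4*t*ℓ))) * γ^2 * ((Real.cosh (2*b) - Real.cos (2*a))/2) := by
      apply mul_nonneg (mul_nonneg (by linarith) (by positivity))
      linarith
    linarith
  -- conclude
  intro hFF
  rw [hFF, mul_zero] at hmain
  have hcast : 2*(t:ℂ)*(2*(t:ℂ)*(b:ℂ)^2*(Real.cosh (2*b):ℂ) + 2*(t:ℂ)*(a:ℂ)^2*(Real.cos (2*a):ℂ)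
          + 2*(b:ℂ)^3*(Real.sinh (2*b):ℂ) - 2*(a:ℂ)^3*(Real.sin (2*a):ℂ))
        + (1 - ((Real.exp (-(4*t*ℓ)) : ℝ):ℂ)) * (γ:ℂ)^2
            * (((Real.cosh (2*b):ℂ) - (Real.cos (2*a):ℂ))/2)
      = ((2*t*(2*t*b^2*Real.cosh (2*b) + 2*t*a^2*Real.cos (2*a)
          + 2*b^3*Real.sinh (2*b) - 2*a^3*Real.sin (2*a))
        + (1 - Real.exp (-(4*t*ℓ))) * γ^2 * ((Real.cosh (2*b) - Real.cos (2*a))/2) : ℝ) : ℂ) := by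
    push_cast
    ring
  rw [hcast] at hmain
  have h0 : (2*t*(2*t*b^2*Real.cosh (2*b) + 2*t*a^2*Real.cos (2*a)
      + 2*b^3*Real.sinh (2*b) - 2*a^3*Real.sin (2*a))
      + (1 - Real.exp (-(4*t*ℓ))) * γ^2 * ((Real.cosh (2*b) - Real.cos (2*a))/2)) = 0 := by
    exact_mod_cast hmain.symm
  linarith
end

section
/- Key inequality from the proof of Lemma 3.5: for every u ∈ (0,1) and every β ≥ 0, u^{−4}·sinh(β/u) + √(1−u⁴)·cos(βu) − u²·sin(βu) ≥ 0. -/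
lemma sinh_three_halves_gt_two : (2 : ℝ) < Real.sinh (3/2) := by
  have hs : Real.sinh (3/2) = (Real.exp (3/2) - Real.exp (-(3/2))) / 2 := by
    rw [Real.sinh_eq]
  set s := Real.exp (3/2) with hsdef
  have hspos : 0 < s := Real.exp_pos _
  have hsq : s * s = Real.exp 3 := by
    rw [hsdef, ← Real.exp_add]; norm_num
  have he3 : (19 : ℝ) < Real.exp 3 := by
    have h1 : (2.7182818283 : ℝ) < Real.exp 1 := Real.exp_one_gt_d9
    have h2 : Real.exp 3 = Real.exp 1 ^ 3 := by
      rw [← Real.exp_nat_mul]; norm_num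
    have h3 : (2.71 : ℝ)^3 < Real.exp 1 ^ 3 :=
      pow_lt_pow_left₀ (by linarith) (by norm_num) (by norm_num)
    rw [h2]; nlinarith
  have hinv : Real.exp (-(3/2)) = 1 / s := by
    rw [Real.exp_neg, hsdef, one_div]
  rw [hs, hinv]
  rw [lt_div_iff₀ (by norm_num : (0:ℝ) < 2)]
  have hs4 : (4.3 : ℝ) < s := by nlinarith
  have h1s : 1 / s < 0.25 := by
    rw [div_lt_iff₀ hspos]; nlinarith
  linarith

theorem stmt_15 (u β : ℝ) (hu0 : 0 < u) (hu1 : u < 1) (hβ : 0 ≤ β) :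
    0 ≤ u^(-4 : ℤ) * Real.sinh (β / u) + Real.sqrt (1 - u^4) * Real.cos (β * u)
        - u^2 * Real.sin (β * u) := by
  have hu4 : u ^ (-4 : ℤ) = 1 / u ^ 4 := by
    rw [zpow_neg, zpow_ofNat, one_div]
  have hu4pos : (0:ℝ) < u ^ 4 := by positivity
  have hu41 : u ^ 4 < 1 := pow_lt_one₀ hu0.le hu1 (by norm_num)
  have hinv1 : (1:ℝ) ≤ 1 / u ^ 4 := by
    rw [le_div_iff₀ hu4pos]; linarith
  have hsqrt0 : 0 ≤ Real.sqrt (1 - u^4) := Real.sqrt_nonneg _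
  have hsqrt1 : Real.sqrt (1 - u^4) ≤ 1 := Real.sqrt_le_one.mpr (by linarith)
  rcases le_or_gt (β * u) (Real.pi / 2) with hcase | hcase
  · -- β*u ≤ π/2 : cos ≥ 0, sin(βu) ≤ βu
    have hcos : 0 ≤ Real.cos (β * u) := by
      apply Real.cos_nonneg_of_mem_Icc
      exact ⟨by nlinarith [Real.pi_pos, mul_nonneg hβ hu0.le], hcase⟩
    have hsin : Real.sin (β * u) ≤ β * u := Real.sin_le (by positivity)
    have hsinh : β / u ≤ Real.sinh (β / u) :=
      Real.self_le_sinh_iff.mpr (by positivity)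
    have key : u^2 * Real.sin (β * u) ≤ (1 / u ^ 4) * Real.sinh (β / u) := by
      have h1 : u^2 * Real.sin (β * u) ≤ u^2 * (β * u) := by nlinarith
      have h2 : β / u ≤ (1 / u^4) * Real.sinh (β / u) := by
        have hs0 : 0 ≤ Real.sinh (β / u) := by
          rw [Real.sinh_nonneg_iff]; positivity
        calc β / u ≤ Real.sinh (β / u) := hsinh
          _ = 1 * Real.sinh (β / u) := (one_mul _).symm
          _ ≤ (1 / u^4) * Real.sinh (β / u) := by nlinarith
      have h3 : u^2 * (β * u) ≤ β / u := by
        have hcube : u^3 ≤ 1/u := by rw [le_div_iff₀ hu0]; nlinarith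
        calc u^2 * (β * u) = β * u^3 := by ring
          _ ≤ β * (1/u) := by nlinarith
          _ = β / u := by ring
      linarith
    rw [hu4]
    have := mul_nonneg hsqrt0 hcos
    linarith
  · -- β*u > π/2 ⇒ β/u > 3/2, sinh big
    have hpi : (3:ℝ)/2 < β * u := by
      have := Real.pi_gt_three; linarith
    have hbu : β * u ≤ β / u := by
      rw [le_div_iff₀ hu0]
      nlinarith
    have hsinh : 2 < Real.sinh (β / u) := by
      calc (2:ℝ) < Real.sinh (3/2) := sinh_three_halves_gt_two
        _ ≤ Real.sinh (β / u) := Real.sinh_le_sinh.mpr (by linarith)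
    have hcos : -1 ≤ Real.cos (β * u) := Real.neg_one_le_cos _
    have hsin : Real.sin (β * u) ≤ 1 := Real.sin_le_one _
    have h1 : 2 ≤ (1 / u^4) * Real.sinh (β / u) := by nlinarith
    have h2 : -1 ≤ Real.sqrt (1 - u^4) * Real.cos (β * u) := by nlinarith
    have h3 : u^2 * Real.sin (β * u) ≤ 1 := by nlinarith
    rw [hu4]
    linarith
end
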